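/- arXiv:1912.02906 — 6 statements merged into one kernel-verified Lean document; each statement's English description precedes it below -/
import Mathlib

section
/- Let V be a finite set and let TD : (V → ℝ) → (V → ℝ) be a γ-contraction in the sup norm (γ ∈ (0,1)) with fixed point Q*. Let Φ : (W → ℝ) → (V → ℝ) and Π : (V → ℝ) → (W → ℝ) be sup-norm non-expansive linear maps, where W is a finite set. Then g = Π ∘ TD ∘ Φ is a γ-contraction on (W → ℝ) in the sup norm, and if Q̂* is its unique fixed point, then ‖Φ Q̂* − Q*‖_∞ ≤ (1/(1−γ)) ‖Φ Π Q* − Q*‖_∞. -/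
theorem projected_bellman_fixed_point_error
    {V W : Type*} [Fintype V] [Fintype W] [Nonempty V] [Nonempty W]
    (γ : ℝ) (hγ : γ ∈ Set.Ioo (0:ℝ) 1)
    (TD : (V → ℝ) → (V → ℝ))
    (hTD : ∀ f g : V → ℝ, ‖TD f - TD g‖ ≤ γ * ‖f - g‖)
    (Qstar : V → ℝ) (hQstar : TD Qstar = Qstar)
    (Φ : (W → ℝ) →ₗ[ℝ] (V → ℝ)) (Pr : (V → ℝ) →ₗ[ℝ] (W → ℝ))
    (hΦ : ∀ f : W → ℝ, ‖Φ f‖ ≤ ‖f‖) (hPr : ∀ f : V → ℝ, ‖Pr f‖ ≤ ‖f‖)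
    (Qhat : W → ℝ) (hQhat : Pr (TD (Φ Qhat)) = Qhat) :
    (∀ f g : W → ℝ, ‖Pr (TD (Φ f)) - Pr (TD (Φ g))‖ ≤ γ * ‖f - g‖) ∧
    ‖Φ Qhat - Qstar‖ ≤ (1 / (1 - γ)) * ‖Φ (Pr Qstar) - Qstar‖ := by
  obtain ⟨hγ0, hγ1⟩ := hγ
  constructor
  · intro f g
    calc ‖Pr (TD (Φ f)) - Pr (TD (Φ g))‖ = ‖Pr (TD (Φ f) - TD (Φ g))‖ := by
          rw [map_sub]
      _ ≤ ‖TD (Φ f) - TD (Φ g)‖ := hPr _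
      _ ≤ γ * ‖Φ f - Φ g‖ := hTD _ _
      _ = γ * ‖Φ (f - g)‖ := by rw [map_sub]
      _ ≤ γ * ‖f - g‖ := by
          exact mul_le_mul_of_nonneg_left (hΦ _) hγ0.le
  · set e := ‖Φ Qhat - Qstar‖ with he
    set d := ‖Φ (Pr Qstar) - Qstar‖ with hd
    have key : ‖Qhat - Pr Qstar‖ ≤ γ * e := by
      calc ‖Qhat - Pr Qstar‖ = ‖Pr (TD (Φ Qhat)) - Pr (TD Qstar)‖ := by
            rw [hQhat, hQstar]
        _ = ‖Pr (TD (Φ Qhat) - TD Qstar)‖ := by rw [map_sub]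
        _ ≤ ‖TD (Φ Qhat) - TD Qstar‖ := hPr _
        _ ≤ γ * e := hTD _ _
    have h1 : e ≤ γ * e + d := by
      calc e = ‖(Φ Qhat - Φ (Pr Qstar)) + (Φ (Pr Qstar) - Qstar)‖ := by
            rw [he]; ring_nf
        _ ≤ ‖Φ Qhat - Φ (Pr Qstar)‖ + d := norm_add_le _ _
        _ = ‖Φ (Qhat - Pr Qstar)‖ + d := by rw [map_sub]
        _ ≤ ‖Qhat - Pr Qstar‖ + d := by linarith [hΦ (Qhat - Pr Qstar)]
        _ ≤ γ * e + d := by linarith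
    have h2 : (1 - γ) * e ≤ d := by linarith
    rw [div_mul_eq_mul_div, one_mul, le_div_iff₀ (by linarith)]
    linarith [mul_comm e (1 - γ)]
end

section
/- Let σ ∈ (0,1], h > 0 with σh > 2, t₀ ≥ max(h, 4σh), and α_t = h/(t+t₀). Define β_{k,t} = α_k ∏_{ℓ=k+1}^{t−1} (1 − σα_ℓ). Then for all t ≥ 2, ∑_{k=1}^{t−1} β_{k,t}² ≤ (2h/σ) · 1/(t + t₀). -/
private lemma teleprod_aux (G : ℕ → ℝ) (hG : ∀ n, G n ≠ 0) :
    ∀ m n : ℕ, m ≤ n → ∏ ℓ ∈ Finset.Ico m n, (G ℓ / G (ℓ + 1)) = G m / G n := by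
  intro m n h
  induction n, h using Nat.le_induction with
  | base => rw [Finset.Ico_self, Finset.prod_empty, div_self (hG m)]
  | succ n hmn ih =>
      rw [Finset.prod_Ico_succ_top hmn, ih, div_mul_div_comm,
        mul_comm (G m) (G n), mul_div_mul_left _ _ (hG n)]

private lemma telesum_aux (F : ℕ → ℝ) :
    ∀ m n : ℕ, m ≤ n → ∑ k ∈ Finset.Ico m n, (F (k + 1) - F k) = F n - F m := by
  intro m n h
  induction n, h using Nat.le_induction with
  | base => simp
  | succ n hmn ih =>
      rw [Finset.sum_Ico_succ_top hmn, ih]; ring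

set_option maxHeartbeats 1000000 in
theorem stepsize_sum_of_squares_bound
    (σ h t₀ : ℝ) (hσ : σ ∈ Set.Ioc (0:ℝ) 1) (hh : 0 < h)
    (hσh : 2 < σ * h) (ht₀ : max h (4 * σ * h) ≤ t₀)
    (α : ℕ → ℝ) (hα : ∀ t : ℕ, α t = h / (t + t₀))
    (β : ℕ → ℕ → ℝ)
    (hβ : ∀ k t : ℕ, β k t = α k * ∏ ℓ ∈ Finset.Ico (k + 1) t, (1 - σ * α ℓ)) :
    ∀ t : ℕ, 2 ≤ t →
      ∑ k ∈ Finset.Ico 1 t, (β k t) ^ 2 ≤ (2 * h / σ) * (1 / ((t : ℝ) + t₀)) := by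
  obtain ⟨hσ0, hσ1⟩ := hσ
  have hapos : (0:ℝ) < σ * h := mul_pos hσ0 hh
  have ha1 : (1:ℝ) ≤ σ * h := by linarith
  have ht0a : 4 * (σ * h) ≤ t₀ := by
    have := le_trans (le_max_right h (4 * σ * h)) ht₀
    linarith [this]
  have ht0pos : (8:ℝ) < t₀ := by nlinarith
  intro t ht
  have htR : (2:ℝ) ≤ (t:ℝ) := by exact_mod_cast ht
  have hApos : (0:ℝ) < (t:ℝ) - 1 + t₀ := by linarith
  have hBpos : (0:ℝ) < (t:ℝ) + t₀ := by linarith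
  have hGpos : ∀ n : ℕ, (0:ℝ) < (n:ℝ) - 1 + t₀ := by
    intro n
    have : (0:ℝ) ≤ (n:ℝ) := Nat.cast_nonneg n
    linarith
  -- pointwise bound on β k t ^ 2
  have hpoint : ∀ k ∈ Finset.Ico 1 t,
      β k t ^ 2 ≤ h ^ 2 / ((t:ℝ) - 1 + t₀) ^ (2 * (σ * h)) * ((k:ℝ) + t₀) ^ (2 * (σ * h) - 2) := by
    intro k hk
    obtain ⟨hk1, hkt⟩ := Finset.mem_Ico.mp hk
    have hkt₀ : (0:ℝ) < (k:ℝ) + t₀ := by positivity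
    have hfac : ∀ ℓ ∈ Finset.Ico (k + 1) t,
        0 ≤ 1 - σ * α ℓ ∧
          1 - σ * α ℓ ≤ (((ℓ:ℝ) - 1 + t₀) / ((ℓ:ℝ) + t₀)) ^ (σ * h) := by
      intro ℓ _
      have hℓt₀ : (0:ℝ) < (ℓ:ℝ) + t₀ := by positivity
      have hval : σ * α ℓ = σ * h / ((ℓ:ℝ) + t₀) := by rw [hα]; ring
      constructor
      · rw [hval, sub_nonneg, div_le_one hℓt₀]
        have : (0:ℝ) ≤ (ℓ:ℝ) := Nat.cast_nonneg ℓ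
        linarith
      · have hs : (-1:ℝ) ≤ -(1 / ((ℓ:ℝ) + t₀)) := by
          have h1 : 1 / ((ℓ:ℝ) + t₀) ≤ 1 := by
            rw [div_le_one hℓt₀]
            have : (0:ℝ) ≤ (ℓ:ℝ) := Nat.cast_nonneg ℓ
            linarith
          linarith
        have hb := one_add_mul_self_le_rpow_one_add hs ha1
        have e1 : 1 + σ * h * -(1 / ((ℓ:ℝ) + t₀)) = 1 - σ * α ℓ := by
          rw [hval]; ring
        have e2 : (1:ℝ) + -(1 / ((ℓ:ℝ) + t₀)) = ((ℓ:ℝ) - 1 + t₀) / ((ℓ:ℝ) + t₀) := by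
          field_simp
          ring
        rw [e1, e2] at hb
        exact hb
    have hprodle : ∏ ℓ ∈ Finset.Ico (k + 1) t, (1 - σ * α ℓ)
        ≤ (((k:ℝ) + t₀) / ((t:ℝ) - 1 + t₀)) ^ (σ * h) := by
      have h1 : ∏ ℓ ∈ Finset.Ico (k + 1) t, (1 - σ * α ℓ)
          ≤ ∏ ℓ ∈ Finset.Ico (k + 1) t, (((ℓ:ℝ) - 1 + t₀) / ((ℓ:ℝ) + t₀)) ^ (σ * h) :=
        Finset.prod_le_prod (fun ℓ hℓ => (hfac ℓ hℓ).1) (fun ℓ hℓ => (hfac ℓ hℓ).2)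
      have h2 : ∏ ℓ ∈ Finset.Ico (k + 1) t, (((ℓ:ℝ) - 1 + t₀) / ((ℓ:ℝ) + t₀)) ^ (σ * h)
          = (((k:ℝ) + t₀) / ((t:ℝ) - 1 + t₀)) ^ (σ * h) := by
        have hGne : ∀ n : ℕ, ((n:ℝ) - 1 + t₀) ≠ 0 := fun n => ne_of_gt (hGpos n)
        have hcong : ∀ ℓ ∈ Finset.Ico (k + 1) t,
            (((ℓ:ℝ) - 1 + t₀) / ((ℓ:ℝ) + t₀)) ^ (σ * h)
              = ((fun n : ℕ => (n:ℝ) - 1 + t₀) ℓ / (fun n : ℕ => (n:ℝ) - 1 + t₀) (ℓ + 1)) ^ (σ * h) := by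
          intro ℓ _
          simp only []
          push_cast
          ring_nf
        rw [Finset.prod_congr rfl hcong,
          Real.finset_prod_rpow _ _ (fun ℓ _ => le_of_lt (div_pos (hGpos ℓ) (hGpos (ℓ + 1)))) _,
          teleprod_aux _ hGne (k + 1) t (by omega)]
        have e3 : ((k + 1 : ℕ) : ℝ) - 1 + t₀ = (k:ℝ) + t₀ := by push_cast; ring
        rw [e3]
      calc ∏ ℓ ∈ Finset.Ico (k + 1) t, (1 - σ * α ℓ)
          ≤ ∏ ℓ ∈ Finset.Ico (k + 1) t, (((ℓ:ℝ) - 1 + t₀) / ((ℓ:ℝ) + t₀)) ^ (σ * h) := h1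
        _ = (((k:ℝ) + t₀) / ((t:ℝ) - 1 + t₀)) ^ (σ * h) := h2
    have hβ0 : 0 ≤ β k t := by
      rw [hβ]
      exact mul_nonneg (by rw [hα]; positivity)
        (Finset.prod_nonneg fun ℓ hℓ => (hfac ℓ hℓ).1)
    have hβle : β k t ≤ h / ((k:ℝ) + t₀) * (((k:ℝ) + t₀) / ((t:ℝ) - 1 + t₀)) ^ (σ * h) := by
      rw [hβ, hα]
      exact mul_le_mul_of_nonneg_left hprodle (by positivity)
    have hsq : β k t ^ 2
        ≤ (h / ((k:ℝ) + t₀) * (((k:ℝ) + t₀) / ((t:ℝ) - 1 + t₀)) ^ (σ * h)) ^ 2 :=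
      pow_le_pow_left₀ hβ0 hβle 2
    have hdpos : (0:ℝ) < ((k:ℝ) + t₀) / ((t:ℝ) - 1 + t₀) := div_pos hkt₀ hApos
    have hx : (h / ((k:ℝ) + t₀) * (((k:ℝ) + t₀) / ((t:ℝ) - 1 + t₀)) ^ (σ * h)) ^ 2
        = h ^ 2 / ((t:ℝ) - 1 + t₀) ^ (2 * (σ * h)) * ((k:ℝ) + t₀) ^ (2 * (σ * h) - 2) := by
      have e4 : ((((k:ℝ) + t₀) / ((t:ℝ) - 1 + t₀)) ^ (σ * h)) ^ 2
          = (((k:ℝ) + t₀) / ((t:ℝ) - 1 + t₀)) ^ (2 * (σ * h)) := by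
        rw [sq, ← Real.rpow_add hdpos]
        ring_nf
      have e5 : (((k:ℝ) + t₀) / ((t:ℝ) - 1 + t₀)) ^ (2 * (σ * h))
          = ((k:ℝ) + t₀) ^ (2 * (σ * h)) / ((t:ℝ) - 1 + t₀) ^ (2 * (σ * h)) :=
        Real.div_rpow (le_of_lt hkt₀) (le_of_lt hApos) _
      have e6 : ((k:ℝ) + t₀) ^ (2 * (σ * h) - 2)
          = ((k:ℝ) + t₀) ^ (2 * (σ * h)) / ((k:ℝ) + t₀) ^ (2 : ℕ) := by
        rw [← Real.rpow_natCast ((k:ℝ) + t₀) 2, ← Real.rpow_sub hkt₀]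
        norm_num
      rw [mul_pow, div_pow, e4, e5, e6]
      field_simp
    rw [hx] at hsq
    exact hsq
  -- sum bound by telescoping
  have hsum : ∑ k ∈ Finset.Ico 1 t, ((k:ℝ) + t₀) ^ (2 * (σ * h) - 2)
      ≤ ((t:ℝ) + t₀) ^ (2 * (σ * h) - 1) / (2 * (σ * h) - 1) := by
    have hq0 : (0:ℝ) < 2 * (σ * h) - 1 := by linarith
    have hq1 : (1:ℝ) ≤ 2 * (σ * h) - 1 := by linarith
    set F : ℕ → ℝ := fun k => ((k:ℝ) + t₀) ^ (2 * (σ * h) - 1) / (2 * (σ * h) - 1) with hF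
    have hpt : ∀ k ∈ Finset.Ico 1 t,
        ((k:ℝ) + t₀) ^ (2 * (σ * h) - 2) ≤ F (k + 1) - F k := by
      intro k _
      simp only [hF]
      push_cast
      set c : ℝ := (k:ℝ) + t₀ with hc
      have hcpos : 0 < c := by rw [hc]; positivity
      have hs : (-1:ℝ) ≤ 1 / c := by
        have : (0:ℝ) ≤ 1 / c := by positivity
        linarith
      have hb := one_add_mul_self_le_rpow_one_add hs hq1
      have e1 : (1:ℝ) + 1 / c = (c + 1) / c := by field_simp
      rw [e1, Real.div_rpow (by linarith) (le_of_lt hcpos)] at hb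
      have hcq : 0 < c ^ (2 * (σ * h) - 1) := Real.rpow_pos_of_pos hcpos _
      have hb2 : (1 + (2 * (σ * h) - 1) * (1 / c)) * c ^ (2 * (σ * h) - 1)
          ≤ (c + 1) ^ (2 * (σ * h) - 1) := by
        have := mul_le_mul_of_nonneg_right hb (le_of_lt hcq)
        rwa [div_mul_cancel₀ _ (ne_of_gt hcq)] at this
      have e2 : (1 + (2 * (σ * h) - 1) * (1 / c)) * c ^ (2 * (σ * h) - 1)
          = c ^ (2 * (σ * h) - 1) + (2 * (σ * h) - 1) * c ^ (2 * (σ * h) - 2) := by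
        have e3 : c ^ (2 * (σ * h) - 2) = c ^ (2 * (σ * h) - 1) / c := by
          rw [show (2 * (σ * h) - 2 : ℝ) = 2 * (σ * h) - 1 - 1 by ring,
            Real.rpow_sub_one (ne_of_gt hcpos)]
        rw [e3]
        field_simp
      rw [e2] at hb2
      have e4 : (k:ℝ) + 1 + t₀ = c + 1 := by rw [hc]; ring
      rw [e4, div_sub_div_same, le_div_iff₀ hq0]
      nlinarith [hb2]
    have htel : ∑ k ∈ Finset.Ico 1 t, (F (k + 1) - F k) = F t - F 1 :=
      telesum_aux F 1 t (by omega)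
    have hF1 : 0 ≤ F 1 := by
      simp only [hF]
      apply div_nonneg _ (le_of_lt hq0)
      have : (0:ℝ) < ((1:ℕ):ℝ) + t₀ := by norm_num; linarith
      exact le_of_lt (Real.rpow_pos_of_pos this _)
    calc ∑ k ∈ Finset.Ico 1 t, ((k:ℝ) + t₀) ^ (2 * (σ * h) - 2)
        ≤ ∑ k ∈ Finset.Ico 1 t, (F (k + 1) - F k) := Finset.sum_le_sum hpt
      _ = F t - F 1 := htel
      _ ≤ F t := by linarith
      _ = ((t:ℝ) + t₀) ^ (2 * (σ * h) - 1) / (2 * (σ * h) - 1) := by simp only [hF]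
  -- the ratio bound
  have hXpos : (0:ℝ) < ((t:ℝ) - 1 + t₀) ^ (2 * (σ * h)) := Real.rpow_pos_of_pos hApos _
  have hq0 : (0:ℝ) < 2 * (σ * h) - 1 := by linarith
  have key : ((t:ℝ) + t₀) ^ (2 * (σ * h)) ≤ 5 / 3 * ((t:ℝ) - 1 + t₀) ^ (2 * (σ * h)) := by
    have h1 : ((t:ℝ) + t₀) / ((t:ℝ) - 1 + t₀) ≤ Real.exp (1 / ((t:ℝ) - 1 + t₀)) := by
      have e1 : ((t:ℝ) + t₀) / ((t:ℝ) - 1 + t₀) = 1 + 1 / ((t:ℝ) - 1 + t₀) := by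
        field_simp
        ring
      rw [e1]
      have := Real.add_one_le_exp (1 / ((t:ℝ) - 1 + t₀))
      linarith
    have h2 : (((t:ℝ) + t₀) / ((t:ℝ) - 1 + t₀)) ^ (2 * (σ * h))
        ≤ Real.exp (1 / ((t:ℝ) - 1 + t₀)) ^ (2 * (σ * h)) :=
      Real.rpow_le_rpow (le_of_lt (div_pos hBpos hApos)) h1 (by linarith)
    have h3 : Real.exp (1 / ((t:ℝ) - 1 + t₀)) ^ (2 * (σ * h))
        = Real.exp (1 / ((t:ℝ) - 1 + t₀) * (2 * (σ * h))) := (Real.exp_mul _ _).symm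
    have h4 : 1 / ((t:ℝ) - 1 + t₀) * (2 * (σ * h)) ≤ 1 / 2 := by
      rw [show 1 / ((t:ℝ) - 1 + t₀) * (2 * (σ * h)) = 2 * (σ * h) / ((t:ℝ) - 1 + t₀) by ring,
        div_le_iff₀ hApos]
      linarith
    have h6 : Real.exp (1 / 2 : ℝ) ≤ 5 / 3 := by
      have hsq : Real.exp (1 / 2 : ℝ) ^ 2 = Real.exp 1 := by
        rw [sq, ← Real.exp_add]; norm_num
      nlinarith [Real.exp_pos (1 / 2 : ℝ), Real.exp_one_lt_d9, hsq]
    have h7 : (((t:ℝ) + t₀) / ((t:ℝ) - 1 + t₀)) ^ (2 * (σ * h)) ≤ 5 / 3 := by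
      calc (((t:ℝ) + t₀) / ((t:ℝ) - 1 + t₀)) ^ (2 * (σ * h))
          ≤ Real.exp (1 / ((t:ℝ) - 1 + t₀) * (2 * (σ * h))) := h3 ▸ h2
        _ ≤ Real.exp (1 / 2) := Real.exp_le_exp.mpr h4
        _ ≤ 5 / 3 := h6
    rw [Real.div_rpow (le_of_lt hBpos) (le_of_lt hApos)] at h7
    rw [← div_le_iff₀ hXpos]
    exact h7
  -- combine
  have hBq : ((t:ℝ) + t₀) ^ (2 * (σ * h) - 1)
      = ((t:ℝ) + t₀) ^ (2 * (σ * h)) / ((t:ℝ) + t₀) := by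
    rw [Real.rpow_sub hBpos, Real.rpow_one]
  calc ∑ k ∈ Finset.Ico 1 t, β k t ^ 2
      ≤ ∑ k ∈ Finset.Ico 1 t,
          h ^ 2 / ((t:ℝ) - 1 + t₀) ^ (2 * (σ * h)) * ((k:ℝ) + t₀) ^ (2 * (σ * h) - 2) :=
        Finset.sum_le_sum hpoint
    _ = h ^ 2 / ((t:ℝ) - 1 + t₀) ^ (2 * (σ * h))
          * ∑ k ∈ Finset.Ico 1 t, ((k:ℝ) + t₀) ^ (2 * (σ * h) - 2) :=
        (Finset.mul_sum _ _ _).symm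
    _ ≤ h ^ 2 / ((t:ℝ) - 1 + t₀) ^ (2 * (σ * h))
          * (((t:ℝ) + t₀) ^ (2 * (σ * h) - 1) / (2 * (σ * h) - 1)) :=
        mul_le_mul_of_nonneg_left hsum (by positivity)
    _ ≤ (2 * h / σ) * (1 / ((t:ℝ) + t₀)) := by
        rw [hBq]
        have hXne : ((t:ℝ) - 1 + t₀) ^ (2 * (σ * h)) ≠ 0 := ne_of_gt hXpos
        have hBne : ((t:ℝ) + t₀) ≠ 0 := ne_of_gt hBpos
        have hqne : (2 * (σ * h) - 1) ≠ 0 := ne_of_gt hq0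
        have e7 : h ^ 2 / ((t:ℝ) - 1 + t₀) ^ (2 * (σ * h))
            * (((t:ℝ) + t₀) ^ (2 * (σ * h)) / ((t:ℝ) + t₀) / (2 * (σ * h) - 1))
            = (h ^ 2 * ((t:ℝ) + t₀) ^ (2 * (σ * h)))
              / (((t:ℝ) - 1 + t₀) ^ (2 * (σ * h)) * (((t:ℝ) + t₀) * (2 * (σ * h) - 1))) := by
          field_simp
        have e8 : (2 * h / σ) * (1 / ((t:ℝ) + t₀)) = (2 * h) / (σ * ((t:ℝ) + t₀)) := by
          rw [div_mul_div_comm, mul_one]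
        rw [e7, e8, div_le_div_iff₀ (mul_pos hXpos (mul_pos hBpos hq0)) (mul_pos hσ0 hBpos)]
        nlinarith [mul_le_mul_of_nonneg_left key
            (le_of_lt (mul_pos (mul_pos hσ0 (pow_pos hh 2)) hBpos)),
          mul_pos (mul_pos hXpos hBpos) hh,
          mul_nonneg (le_of_lt (mul_pos (mul_pos hXpos hBpos) hh))
            (by linarith : (0:ℝ) ≤ σ * h - 2)]
end

section
/- Let σ ∈ (0,1], h > 0, τ ∈ ℕ with τ ≥ 1, t₀ ≥ max(h, 4σh, τ), σh > 2, and α_t = h/(t+t₀). With β_{k,t} = α_k ∏_{ℓ=k+1}^{t−1}(1−σα_ℓ), it holds for all t > τ that ∑_{k=τ}^{t−1} β_{k,t} ∑_{ℓ=k−τ+1}^{k−1} α_ℓ ≤ (8hτ/σ) · 1/(t+t₀). -/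
open Real Finset

lemma prod_Ico_telescope (g : ℕ → ℝ) (hg : ∀ n, g n ≠ 0) {a b : ℕ} (hab : a ≤ b) :
    ∏ ℓ ∈ Finset.Ico a b, (g ℓ / g (ℓ + 1)) = g a / g b := by
  induction b, hab using Nat.le_induction with
  | base => rw [Finset.Ico_self, Finset.prod_empty, div_self (hg a)]
  | succ b hab ih =>
      rw [Finset.prod_Ico_succ_top hab, ih, div_mul_div_comm, mul_comm (g a),
        mul_div_mul_left _ _ (hg b)]

lemma sum_Ico_telescope (g : ℕ → ℝ) {a b : ℕ} (hab : a ≤ b) :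
    ∑ ℓ ∈ Finset.Ico a b, (g (ℓ + 1) - g ℓ) = g b - g a := by
  induction b, hab using Nat.le_induction with
  | base => simp
  | succ b hab ih => rw [Finset.sum_Ico_succ_top hab, ih]; ring

set_option maxHeartbeats 1000000 in
theorem stepsize_window_sum_bound
    (σ h t₀ : ℝ) (τ : ℕ) (hσ : σ ∈ Set.Ioc (0:ℝ) 1) (hh : 0 < h)
    (hτ : 1 ≤ τ) (hσh : 2 < σ * h)
    (ht₀ : max h (max (4 * σ * h) (τ : ℝ)) ≤ t₀)
    (α : ℕ → ℝ) (hα : ∀ t : ℕ, α t = h / (t + t₀))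
    (β : ℕ → ℕ → ℝ)
    (hβ : ∀ k t : ℕ, β k t = α k * ∏ ℓ ∈ Finset.Ico (k + 1) t, (1 - σ * α ℓ)) :
    ∀ t : ℕ, τ < t →
      ∑ k ∈ Finset.Ico τ t, β k t * (∑ ℓ ∈ Finset.Ico (k - τ + 1) k, α ℓ) ≤
        (8 * h * τ / σ) * (1 / ((t : ℝ) + t₀)) := by
  obtain ⟨hσ0, hσ1⟩ := hσ
  set c : ℝ := σ * h with hc_def
  have hc : 2 < c := hσh
  have hc1 : 1 ≤ c := by linarith
  have ht₀h : h ≤ t₀ := le_trans (le_max_left _ _) ht₀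
  have ht₀c : 4 * c ≤ t₀ := by
    have := le_trans (le_max_of_le_right (le_max_left _ _)) ht₀
    linarith [this]
  have ht₀τ : (τ : ℝ) ≤ t₀ := le_trans (le_max_of_le_right (le_max_right _ _)) ht₀
  have ht₀pos : 0 < t₀ := by linarith
  have hxpos : ∀ n : ℕ, 0 < (n : ℝ) + t₀ := fun n => by positivity
  have hxnn : ∀ n : ℕ, (0:ℝ) ≤ (n : ℝ) + t₀ := fun n => (hxpos n).le
  -- each α is positive
  have hαpos : ∀ n : ℕ, 0 < α n := fun n => by rw [hα]; positivity
  -- ratio lower bound : (x/(x+1))^c ≥ 3/4, and Bernoulli bound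
  have hratio : ∀ n : ℕ, (1 : ℝ) - c / ((n:ℝ) + 1 + t₀) ≤
      (((n:ℝ) + t₀) / ((n:ℝ) + 1 + t₀)) ^ c := by
    intro n
    have hy : (0:ℝ) < (n:ℝ) + 1 + t₀ := by have := hxpos n; linarith
    have hs : (-1:ℝ) ≤ -1 / ((n:ℝ) + 1 + t₀) := by
      rw [neg_div]
      have h1 : 1 / ((n:ℝ) + 1 + t₀) ≤ 1 := by
        rw [div_le_one hy]; have := hxpos n; linarith
      linarith
    have := one_add_mul_self_le_rpow_one_add hs hc1
    have heq : (1 : ℝ) + -1 / ((n:ℝ) + 1 + t₀) = ((n:ℝ) + t₀) / ((n:ℝ) + 1 + t₀) := by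
      field_simp
      ring
    rw [heq] at this
    calc (1 : ℝ) - c / ((n:ℝ) + 1 + t₀) = 1 + c * (-1 / ((n:ℝ) + 1 + t₀)) := by ring
      _ ≤ _ := this
  have hratio34 : ∀ n : ℕ, (3/4 : ℝ) ≤ (((n:ℝ) + t₀) / ((n:ℝ) + 1 + t₀)) ^ c := by
    intro n
    refine le_trans ?_ (hratio n)
    have hy : (0:ℝ) < (n:ℝ) + 1 + t₀ := by have := hxpos n; linarith
    have : c / ((n:ℝ) + 1 + t₀) ≤ c / (4 * c) := by
      apply div_le_div_of_nonneg_left (by linarith) (by linarith) (by linarith)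
    have h4c : c / (4 * c) = 1/4 := by field_simp
    rw [h4c] at this; linarith
  -- factor bound
  have hfacnn : ∀ ℓ : ℕ, (0:ℝ) ≤ 1 - σ * α ℓ := by
    intro ℓ
    rw [hα]
    have hx := hxpos ℓ
    have h1 : σ * (h / ((ℓ:ℝ) + t₀)) = c / ((ℓ:ℝ) + t₀) := by ring
    rw [h1]
    have : c / ((ℓ:ℝ) + t₀) ≤ c / (4*c) :=
      div_le_div_of_nonneg_left (by linarith) (by linarith) (by linarith)
    have h4c : c / (4 * c) = 1/4 := by field_simp
    rw [h4c] at this; linarith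
  have hfac : ∀ ℓ : ℕ, 1 - σ * α ℓ ≤ (((ℓ:ℝ) + t₀) / ((ℓ:ℝ) + 1 + t₀)) ^ c := by
    intro ℓ
    refine le_trans ?_ (hratio ℓ)
    rw [hα]
    have hx := hxpos ℓ
    have h1 : σ * (h / ((ℓ:ℝ) + t₀)) = c / ((ℓ:ℝ) + t₀) := by ring
    rw [h1]
    have : c / ((ℓ:ℝ) + 1 + t₀) ≤ c / ((ℓ:ℝ) + t₀) :=
      div_le_div_of_nonneg_left (by linarith) hx (by linarith)
    linarith
  intro t ht
  -- product bound
  have hprod : ∀ k : ℕ, k < t →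
      (∏ ℓ ∈ Finset.Ico (k+1) t, (1 - σ * α ℓ)) ≤
        (((k:ℝ) + 1 + t₀) ^ c) / (((t:ℝ) + t₀) ^ c) := by
    intro k hk
    have step1 : (∏ ℓ ∈ Finset.Ico (k+1) t, (1 - σ * α ℓ)) ≤
        ∏ ℓ ∈ Finset.Ico (k+1) t, ((((ℓ:ℝ) + t₀) / ((ℓ:ℝ) + 1 + t₀)) ^ c) := by
      apply Finset.prod_le_prod (fun ℓ _ => hfacnn ℓ) (fun ℓ _ => hfac ℓ)
    have step2 : ∏ ℓ ∈ Finset.Ico (k+1) t, ((((ℓ:ℝ) + t₀) / ((ℓ:ℝ) + 1 + t₀)) ^ c)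
        = ((((k:ℝ)+1+t₀) / ((t:ℝ)+t₀))) ^ c := by
      have hgne : ∀ n : ℕ, ((n:ℝ) + t₀) ≠ 0 := fun n => (hxpos n).ne'
      have hcast : ∀ ℓ : ℕ, ((ℓ:ℝ) + 1 + t₀) = (((ℓ+1 : ℕ) : ℝ) + t₀) := by
        intro ℓ; push_cast; ring
      rw [Real.finset_prod_rpow _ _ (fun ℓ _ => by positivity)]
      congr 1
      calc ∏ ℓ ∈ Finset.Ico (k+1) t, (((ℓ:ℝ) + t₀) / ((ℓ:ℝ) + 1 + t₀))
          = ∏ ℓ ∈ Finset.Ico (k+1) t, (((ℓ:ℝ) + t₀) / (((ℓ+1:ℕ):ℝ) + t₀)) := by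
            apply Finset.prod_congr rfl; intro ℓ _; rw [hcast]
        _ = (((k+1:ℕ):ℝ) + t₀) / (((t:ℕ):ℝ) + t₀) :=
            prod_Ico_telescope (fun n => (n:ℝ) + t₀) hgne (by omega)
        _ = ((k:ℝ)+1+t₀) / ((t:ℝ)+t₀) := by push_cast; ring
    rw [step2] at step1
    rwa [Real.div_rpow (by have := hxpos k; linarith) (hxnn t)] at step1
  -- pointwise bound on terms in the sum
  have hterm : ∀ k ∈ Finset.Ico τ t,
      β k t * (∑ ℓ ∈ Finset.Ico (k - τ + 1) k, α ℓ) ≤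
        (8/3 * τ * h^2 / (((t:ℝ) + t₀) ^ c)) * (((k:ℝ) + t₀) ^ (c - 2)) := by
    intro k hk
    rw [Finset.mem_Ico] at hk
    obtain ⟨hk1, hk2⟩ := hk
    -- inner sum bound
    have hinner_nn : (0:ℝ) ≤ ∑ ℓ ∈ Finset.Ico (k - τ + 1) k, α ℓ :=
      Finset.sum_nonneg fun ℓ _ => (hαpos ℓ).le
    have hinner : (∑ ℓ ∈ Finset.Ico (k - τ + 1) k, α ℓ) ≤ 2 * τ * h / ((k:ℝ) + t₀) := by
      have hbd : ∀ ℓ ∈ Finset.Ico (k - τ + 1) k, α ℓ ≤ 2 * h / ((k:ℝ) + t₀) := by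
        intro ℓ hℓ
        rw [Finset.mem_Ico] at hℓ
        have hℓ1 : k + 1 ≤ ℓ + τ := by omega
        have hℓ1' : (k:ℝ) + 1 ≤ (ℓ:ℝ) + (τ:ℝ) := by exact_mod_cast hℓ1
        rw [hα]
        rw [div_le_div_iff₀ (hxpos ℓ) (hxpos k)]
        have hℓnn : (0:ℝ) ≤ (ℓ:ℝ) := Nat.cast_nonneg ℓ
        nlinarith [hh.le, ht₀τ, hxpos ℓ, hxpos k]
      calc (∑ ℓ ∈ Finset.Ico (k - τ + 1) k, α ℓ)
          ≤ (Finset.Ico (k - τ + 1) k).card • (2 * h / ((k:ℝ) + t₀)) :=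
            Finset.sum_le_card_nsmul _ _ _ hbd
        _ = ((Finset.Ico (k - τ + 1) k).card : ℝ) * (2 * h / ((k:ℝ) + t₀)) := by
            rw [nsmul_eq_mul]
        _ ≤ (τ:ℝ) * (2 * h / ((k:ℝ) + t₀)) := by
            apply mul_le_mul_of_nonneg_right _ (by positivity)
            rw [Nat.card_Ico]
            exact_mod_cast Nat.cast_le.mpr (by omega : k - (k - τ + 1) ≤ τ)
        _ = 2 * τ * h / ((k:ℝ) + t₀) := by ring
    -- β bound
    have hβnn : (0:ℝ) ≤ β k t := by
      rw [hβ]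
      exact mul_nonneg (hαpos k).le (Finset.prod_nonneg fun ℓ _ => hfacnn ℓ)
    have hβle : β k t ≤ (h / ((k:ℝ) + t₀)) * ((((k:ℝ)+1+t₀) ^ c) / (((t:ℝ)+t₀) ^ c)) := by
      rw [hβ, hα]
      apply mul_le_mul_of_nonneg_left (hprod k hk2) (by positivity)
    -- combine
    have hcomb : β k t * (∑ ℓ ∈ Finset.Ico (k - τ + 1) k, α ℓ) ≤
        ((h / ((k:ℝ) + t₀)) * ((((k:ℝ)+1+t₀) ^ c) / (((t:ℝ)+t₀) ^ c))) *
          (2 * τ * h / ((k:ℝ) + t₀)) :=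
      mul_le_mul hβle hinner hinner_nn (by positivity)
    refine le_trans hcomb ?_
    -- key: (x_{k+1})^c ≤ 4/3 * x_k^2 * x_k^(c-2)
    have hxk := hxpos k
    have hkey : (((k:ℝ)+1+t₀) ^ c) ≤ 4/3 * (((k:ℝ)+t₀)^2 * (((k:ℝ)+t₀) ^ (c-2))) := by
      have h34 := hratio34 k
      have hsplit : (((k:ℝ)+t₀)) ^ c =
          ((((k:ℝ)+t₀) / ((k:ℝ)+1+t₀)) ^ c) * (((k:ℝ)+1+t₀) ^ c) := by
        rw [← Real.mul_rpow (by positivity) (by positivity)]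
        congr 1
        field_simp
      have hle : 3/4 * (((k:ℝ)+1+t₀) ^ c) ≤ (((k:ℝ)+t₀)) ^ c := by
        rw [hsplit]
        apply mul_le_mul_of_nonneg_right h34 (Real.rpow_nonneg (by positivity) _)
      have hxc : (((k:ℝ)+t₀)) ^ c = ((k:ℝ)+t₀)^2 * (((k:ℝ)+t₀) ^ (c-2)) := by
        rw [← Real.rpow_two, ← Real.rpow_add hxk]
        ring_nf
      rw [hxc] at hle
      linarith
    have htc : (0:ℝ) < ((t:ℝ)+t₀) ^ c := Real.rpow_pos_of_pos (hxpos t) c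
    have hτ1 : (1:ℝ) ≤ (τ:ℝ) := by exact_mod_cast hτ
    calc ((h / ((k:ℝ) + t₀)) * ((((k:ℝ)+1+t₀) ^ c) / (((t:ℝ)+t₀) ^ c))) *
          (2 * τ * h / ((k:ℝ) + t₀))
        = (2 * τ * h^2 / (((k:ℝ)+t₀)^2 * (((t:ℝ)+t₀) ^ c))) * (((k:ℝ)+1+t₀) ^ c) := by
          field_simp
      _ ≤ (2 * τ * h^2 / (((k:ℝ)+t₀)^2 * (((t:ℝ)+t₀) ^ c))) *
            (4/3 * (((k:ℝ)+t₀)^2 * (((k:ℝ)+t₀) ^ (c-2)))) := by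
          apply mul_le_mul_of_nonneg_left hkey (by positivity)
      _ = (8/3 * τ * h^2 / (((t:ℝ) + t₀) ^ c)) * (((k:ℝ) + t₀) ^ (c - 2)) := by
          field_simp; ring
  -- sum of powers bound
  have hsum : ∑ k ∈ Finset.Ico τ t, (((k:ℝ) + t₀) ^ (c - 2)) ≤
      (((t:ℝ) + t₀) ^ (c - 1)) / (c - 1) := by
    have hterm2 : ∀ k ∈ Finset.Ico τ t, (((k:ℝ) + t₀) ^ (c - 2)) ≤
        ((((k+1:ℕ):ℝ) + t₀) ^ (c-1) - (((k:ℕ):ℝ) + t₀) ^ (c-1)) / (c - 1) := by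
      intro k _
      have hxk := hxpos k
      rw [le_div_iff₀ (by linarith : (0:ℝ) < c - 1)]
      have hs : (-1:ℝ) ≤ 1 / ((k:ℝ) + t₀) := by
        have : (0:ℝ) ≤ 1 / ((k:ℝ) + t₀) := by positivity
        linarith
      have hbern := one_add_mul_self_le_rpow_one_add hs (by linarith : (1:ℝ) ≤ c - 1)
      have hsplit : (((k+1:ℕ):ℝ) + t₀) ^ (c-1) =
          (((k:ℝ) + t₀) ^ (c-1)) * ((1 + 1/((k:ℝ)+t₀)) ^ (c-1)) := by
        rw [← Real.mul_rpow (hxnn k) (by positivity)]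
        congr 1
        push_cast
        field_simp
        ring
      have hstep : (((k:ℝ) + t₀) ^ (c-1)) * (1 + (c-1) * (1/((k:ℝ)+t₀))) ≤
          (((k+1:ℕ):ℝ) + t₀) ^ (c-1) := by
        rw [hsplit]
        exact mul_le_mul_of_nonneg_left hbern (Real.rpow_nonneg (hxnn k) _)
      have hpow2 : (((k:ℝ) + t₀) ^ (c-1)) * (1/((k:ℝ)+t₀)) = ((k:ℝ) + t₀) ^ (c-2) := by
        rw [one_div, ← Real.rpow_neg_one ((k:ℝ) + t₀), ← Real.rpow_add hxk]
        congr 1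
        ring
      nlinarith [hstep, hpow2]
    calc ∑ k ∈ Finset.Ico τ t, (((k:ℝ) + t₀) ^ (c - 2))
        ≤ ∑ k ∈ Finset.Ico τ t,
            (((((k+1:ℕ):ℝ) + t₀) ^ (c-1) - (((k:ℕ):ℝ) + t₀) ^ (c-1)) / (c - 1)) :=
          Finset.sum_le_sum hterm2
      _ = (∑ k ∈ Finset.Ico τ t,
            ((((k+1:ℕ):ℝ) + t₀) ^ (c-1) - (((k:ℕ):ℝ) + t₀) ^ (c-1))) / (c - 1) := by
          rw [Finset.sum_div]
      _ = ((((t:ℕ):ℝ) + t₀) ^ (c-1) - (((τ:ℕ):ℝ) + t₀) ^ (c-1)) / (c - 1) := by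
          rw [sum_Ico_telescope (fun n => (((n:ℕ):ℝ) + t₀) ^ (c-1)) (le_of_lt ht)]
      _ ≤ (((t:ℝ) + t₀) ^ (c - 1)) / (c - 1) := by
          apply div_le_div_of_nonneg_right _ (by linarith)
          have : (0:ℝ) ≤ (((τ:ℕ):ℝ) + t₀) ^ (c-1) := Real.rpow_nonneg (hxnn τ) _
          push_cast
          linarith
  -- put everything together
  have htc : (0:ℝ) < ((t:ℝ)+t₀) ^ c := Real.rpow_pos_of_pos (hxpos t) c
  have hτ1 : (1:ℝ) ≤ (τ:ℝ) := by exact_mod_cast hτ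
  calc ∑ k ∈ Finset.Ico τ t, β k t * (∑ ℓ ∈ Finset.Ico (k - τ + 1) k, α ℓ)
      ≤ ∑ k ∈ Finset.Ico τ t,
          ((8/3 * τ * h^2 / (((t:ℝ) + t₀) ^ c)) * (((k:ℝ) + t₀) ^ (c - 2))) :=
        Finset.sum_le_sum hterm
    _ = (8/3 * τ * h^2 / (((t:ℝ) + t₀) ^ c)) *
          (∑ k ∈ Finset.Ico τ t, (((k:ℝ) + t₀) ^ (c - 2))) := by
        rw [Finset.mul_sum]
    _ ≤ (8/3 * τ * h^2 / (((t:ℝ) + t₀) ^ c)) *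
          ((((t:ℝ) + t₀) ^ (c - 1)) / (c - 1)) := by
        apply mul_le_mul_of_nonneg_left hsum (by positivity)
    _ ≤ (8 * h * τ / σ) * (1 / ((t : ℝ) + t₀)) := by
        have hxt := hxpos t
        have hratio2 : (((t:ℝ) + t₀) ^ (c - 1)) / (((t:ℝ) + t₀) ^ c) = 1 / ((t:ℝ) + t₀) := by
          rw [← Real.rpow_sub hxt]
          have : c - 1 - c = -1 := by ring
          rw [this, Real.rpow_neg_one, one_div]
        have hrw : (8/3 * τ * h^2 / (((t:ℝ) + t₀) ^ c)) *
            ((((t:ℝ) + t₀) ^ (c - 1)) / (c - 1)) =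
            (8/3 * τ * h^2 / (c-1)) * ((((t:ℝ) + t₀) ^ (c - 1)) / (((t:ℝ) + t₀) ^ c)) := by
          ring
        rw [hrw, hratio2]
        apply mul_le_mul_of_nonneg_right _ (by positivity)
        rw [div_le_div_iff₀ (by linarith : (0:ℝ) < c - 1) hσ0]
        have hhc : h^2*σ = h*c := by rw [hc_def]; ring
        have hA : (0:ℝ) ≤ h*(τ:ℝ)*(2/3*c-1) :=
          mul_nonneg (mul_nonneg hh.le (by linarith)) (by linarith)
        nlinarith [hhc, hA]
end

section
/- Let γ ∈ (0,1), ω ∈ (0,1], σ ∈ (0,1], h > 0 with σh(1−√γ) ≥ 1, t₀ ≥ 1, and α_t = h/(t+t₀) with α_0 ≤ 1/2. Let (d_k)_{k≥0} be any sequence with d_k ∈ [σ, 1], and define b_{k,t} = α_k d_k ∏_{ℓ=k+1}^{t−1}(1 − α_ℓ d_ℓ). Then for all integers t > τ ≥ 0, ∑_{k=τ}^{t−1} b_{k,t} / (k+t₀)^ω ≤ 1/(√γ · (t+t₀)^ω). -/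
open Real in
lemma key_ineq (A ω x p : ℝ) (hA0 : 0 < A) (hA1 : A ≤ 1) (hω1 : ω ≤ 1)
    (hx : 1 ≤ x) (hp0 : 0 ≤ p) (hp : p ≤ 1/2) (hpx : 1 ≤ p * (1 - A) * x) :
    (1 - p) / (A * x ^ ω) + p / x ^ ω ≤ 1 / (A * (x + 1) ^ ω) := by
  have hx0 : 0 < x := lt_of_lt_of_le one_pos hx
  have hxw : (0:ℝ) < x ^ ω := rpow_pos_of_pos hx0 ω
  have hx1w : (0:ℝ) < (x + 1) ^ ω := rpow_pos_of_pos (by linarith) ω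
  set c := p * (1 - A) with hc
  have hc0 : 0 ≤ c := by nlinarith
  have hc2 : c ≤ 1/2 := by nlinarith
  have hmain : (1 - c) * (x + 1) ^ ω ≤ x ^ ω := by
    have h1 : 1 - c ≤ x / (x + 1) := by
      rw [le_div_iff₀ (by linarith)]
      nlinarith
    have h2 : x / (x + 1) ≤ (x / (x + 1)) ^ ω := by
      have := rpow_le_rpow_of_exponent_ge (x := x / (x+1))
        (by positivity) (by rw [div_le_one (by linarith)]; linarith) hω1
      simpa using this
    have h3 : (x / (x + 1)) ^ ω * (x + 1) ^ ω = x ^ ω := by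
      rw [div_rpow hx0.le (by linarith)]
      field_simp
    calc (1 - c) * (x + 1) ^ ω ≤ (x / (x+1)) ^ ω * (x + 1) ^ ω := by
          apply mul_le_mul_of_nonneg_right (le_trans h1 h2) hx1w.le
      _ = x ^ ω := h3
  have hLHS : (1 - p) / (A * x ^ ω) + p / x ^ ω = (1 - c) / (A * x ^ ω) := by
    field_simp
    ring
  rw [hLHS, div_le_div_iff₀ (by positivity) (by positivity)]
  nlinarith [mul_le_mul_of_nonneg_left hmain hA0.le]

theorem weighted_stepsize_decay_bound
    (γ ω σ h t₀ : ℝ) (hγ : γ ∈ Set.Ioo (0:ℝ) 1) (hω : ω ∈ Set.Ioc (0:ℝ) 1)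
    (hσ : σ ∈ Set.Ioc (0:ℝ) 1) (hh : 0 < h)
    (hσh : 1 ≤ σ * h * (1 - Real.sqrt γ)) (ht₀ : 1 ≤ t₀)
    (α : ℕ → ℝ) (hα : ∀ t : ℕ, α t = h / (t + t₀)) (hα0 : α 0 ≤ 1 / 2)
    (d : ℕ → ℝ) (hd : ∀ k, d k ∈ Set.Icc σ 1)
    (b : ℕ → ℕ → ℝ)
    (hb : ∀ k t : ℕ, b k t = α k * d k * ∏ ℓ ∈ Finset.Ico (k + 1) t, (1 - α ℓ * d ℓ)) :
    ∀ τ t : ℕ, τ < t →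
      ∑ k ∈ Finset.Ico τ t, b k t / (((k : ℝ) + t₀) ^ ω) ≤
        1 / (Real.sqrt γ * ((t : ℝ) + t₀) ^ ω) := by
  obtain ⟨hγ0, hγ1⟩ := hγ
  obtain ⟨hω0, hω1⟩ := hω
  obtain ⟨hσ0, hσ1⟩ := hσ
  have hA0 : 0 < Real.sqrt γ := Real.sqrt_pos.2 hγ0
  have hA1 : Real.sqrt γ ≤ 1 := by
    rw [show (1:ℝ) = Real.sqrt 1 from (Real.sqrt_one).symm]
    exact Real.sqrt_le_sqrt hγ1.le
  -- facts about p_t := α t * d t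
  have hxpos : ∀ t : ℕ, (1:ℝ) ≤ (t : ℝ) + t₀ := fun t => by
    have : (0:ℝ) ≤ t := Nat.cast_nonneg t
    linarith
  have hp0 : ∀ t : ℕ, 0 ≤ α t * d t := fun t => by
    have h1 := (hd t).1
    have := hxpos t
    have hd0 : 0 ≤ d t := le_trans hσ0.le h1
    rw [hα]
    have : 0 ≤ h / ((t:ℝ) + t₀) := by positivity
    nlinarith
  have hphalf : ∀ t : ℕ, α t * d t ≤ 1 / 2 := fun t => by
    have h2 := (hd t).2
    have h1 := (hd t).1
    have hx := hxpos t
    have hαt : α t ≤ α 0 := by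
      rw [hα, hα]
      simp only [Nat.cast_zero, zero_add]
      apply div_le_div_of_nonneg_left hh.le (by linarith)
      have : (0:ℝ) ≤ t := Nat.cast_nonneg t
      linarith
    have hαnn : 0 ≤ α t := by rw [hα]; positivity
    nlinarith
  have hpx : ∀ t : ℕ, 1 ≤ α t * d t * (1 - Real.sqrt γ) * ((t:ℝ) + t₀) := fun t => by
    have h1 := (hd t).1
    have hx := hxpos t
    have hA1' : Real.sqrt γ ≤ 1 := hA1
    rw [hα]
    have hxne : ((t:ℝ) + t₀) ≠ 0 := by linarith
    have : h / ((t:ℝ) + t₀) * d t * (1 - Real.sqrt γ) * ((t:ℝ) + t₀)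
        = h * d t * (1 - Real.sqrt γ) := by field_simp
    rw [this]
    nlinarith
  intro τ t htlt
  -- strengthen to t ≥ τ
  suffices H : ∀ t : ℕ, τ ≤ t →
      ∑ k ∈ Finset.Ico τ t, b k t / (((k : ℝ) + t₀) ^ ω) ≤
        1 / (Real.sqrt γ * ((t : ℝ) + t₀) ^ ω) from H t htlt.le
  intro t ht
  induction t, ht using Nat.le_induction with
  | base =>
      simp only [Finset.Ico_self, Finset.sum_empty]
      positivity
  | succ t ht ih =>
      set p := α t * d t with hpdef
      have hsum : ∑ k ∈ Finset.Ico τ (t+1), b k (t+1) / (((k : ℝ) + t₀) ^ ω)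
          = (1 - p) * (∑ k ∈ Finset.Ico τ t, b k t / (((k : ℝ) + t₀) ^ ω))
            + p / (((t : ℝ) + t₀) ^ ω) := by
        rw [Finset.sum_Ico_succ_top ht, Finset.mul_sum]
        congr 1
        · apply Finset.sum_congr rfl
          intro k hk
          have hk2 : k + 1 ≤ t := (Finset.mem_Ico.1 hk).2
          rw [hb k (t+1), hb k t, Finset.prod_Ico_succ_top hk2]
          ring
        · rw [hb t (t+1)]
          simp [hpdef]
      rw [hsum]
      have hkey := key_ineq (Real.sqrt γ) ω ((t:ℝ) + t₀) p hA0 hA1 hω1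
        (hxpos t) (hp0 t) (hphalf t) (hpx t)
      have h1mp : 0 ≤ 1 - p := by have := hphalf t; linarith
      have step1 : (1 - p) * (∑ k ∈ Finset.Ico τ t, b k t / (((k : ℝ) + t₀) ^ ω))
          ≤ (1 - p) * (1 / (Real.sqrt γ * ((t : ℝ) + t₀) ^ ω)) :=
        mul_le_mul_of_nonneg_left ih h1mp
      have hcast : ((t:ℝ) + t₀ + 1) = (((t+1 : ℕ) : ℝ) + t₀) := by
        push_cast; ring
      calc (1 - p) * (∑ k ∈ Finset.Ico τ t, b k t / (((k : ℝ) + t₀) ^ ω))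
            + p / (((t : ℝ) + t₀) ^ ω)
          ≤ (1 - p) / (Real.sqrt γ * ((t : ℝ) + t₀) ^ ω) + p / (((t : ℝ) + t₀) ^ ω) := by
            rw [mul_one_div] at step1; linarith
        _ ≤ 1 / (Real.sqrt γ * (((t : ℝ) + t₀) + 1) ^ ω) := hkey
        _ = 1 / (Real.sqrt γ * (((t+1 : ℕ) : ℝ) + t₀) ^ ω) := by rw [hcast]
end

section
/- Let (Ω, F, P) be a probability space with filtration (F_t)_{t≥0}, and let (X_t)_{t≥0} be an (F_t)-adapted real process such that E[X_t | F_{t−τ}] = 0 for all t ≥ τ (with τ ≥ 1 a fixed integer, and F_s trivial for s < 0), and |X_t| ≤ X̄_t almost surely for deterministic constants X̄_t. Then for any t and δ ∈ (0,1), with probability at least 1−δ, |∑_{k=0}^t X_k| ≤ sqrt(2τ ∑_{k=0}^t X̄_k² · log(2τ/δ)). -/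
open MeasureTheory
open Real Finset

lemma sum_residue (τ t : ℕ) (hτ : 1 ≤ τ) (f : ℕ → ℝ) :
    ∑ r ∈ Finset.range τ, ∑ i ∈ Finset.range (t+1),
        (if r + i*τ ≤ t then f (r+i*τ) else 0)
      = ∑ k ∈ Finset.range (t+1), f k := by
  have h1 : ∀ r, ∑ i ∈ Finset.range (t+1), (if r + i*τ ≤ t then f (r+i*τ) else 0)
      = ∑ i ∈ (Finset.range (t+1)).filter (fun i => r + i*τ ≤ t), f (r+i*τ) := by
    intro r; rw [Finset.sum_filter]
  simp_rw [h1]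
  rw [Finset.sum_sigma']
  refine Finset.sum_nbij' (fun p => p.1 + p.2 * τ) (fun k => ⟨k % τ, k / τ⟩) ?_ ?_ ?_ ?_ ?_
  · rintro ⟨r, i⟩ hp
    simp only [Finset.mem_sigma, Finset.mem_filter, Finset.mem_range] at hp ⊢
    omega
  · intro k hk
    simp only [Finset.mem_range] at hk
    simp only [Finset.mem_sigma, Finset.mem_filter, Finset.mem_range]
    have h2 : k % τ + k / τ * τ = k := Nat.mod_add_div' k τ
    have := Nat.mod_lt k (show 0 < τ by omega)
    have := Nat.div_le_self k τ
    omega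
  · rintro ⟨r, i⟩ hp
    simp only [Finset.mem_sigma, Finset.mem_filter, Finset.mem_range] at hp
    have h3 : (r + i * τ) % τ = r := by
      rw [Nat.add_mul_mod_self_right, Nat.mod_eq_of_lt hp.1]
    have h4 : (r + i * τ) / τ = i := by
      rw [Nat.add_mul_div_right _ _ (show 0 < τ by omega), Nat.div_eq_of_lt hp.1]
      omega
    simp [h3, h4]
  · intro k hk
    simp only
    exact Nat.mod_add_div' k τ
  · rintro ⟨r, i⟩ _; rfl


lemma condexp_exp_le {Ω : Type*} {m m0 : MeasurableSpace Ω} (hm : m ≤ m0)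
    (μ : Measure Ω) [IsProbabilityMeasure μ]
    (Y : Ω → ℝ) (hY : StronglyMeasurable Y)
    (c l : ℝ) (hc : ∀ᵐ ω ∂μ, |Y ω| ≤ c)
    (h0 : μ[Y|m] =ᵐ[μ] 0) :
    μ[fun ω => exp (l * Y ω)|m] ≤ᵐ[μ] fun _ => exp (l^2 * c^2 / 2) := by
  have hc0 : 0 ≤ c := by
    obtain ⟨ω, hω⟩ := hc.exists
    exact (abs_nonneg _).trans hω
  rcases hc0.eq_or_lt with hc0' | hcpos
  · -- c = 0
    subst hc0'
    have hY0 : Y =ᵐ[μ] 0 := by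
      filter_upwards [hc] with ω h
      simpa [abs_nonpos_iff] using h
    have h1 : (fun ω => exp (l * Y ω)) =ᵐ[μ] fun _ => (1:ℝ) := by
      filter_upwards [hY0] with ω h
      simp [h]
    have h2 : μ[fun ω => exp (l * Y ω)|m] =ᵐ[μ] fun _ => (1:ℝ) :=
      (condExp_congr_ae h1).trans (Filter.EventuallyEq.of_eq (condExp_const hm 1))
    filter_upwards [h2] with ω hω
    rw [hω]
    simp
  · -- c > 0
    have hYint : Integrable Y μ := by
      refine Integrable.mono' (integrable_const c) hY.aestronglyMeasurable ?_
      filter_upwards [hc] with ω h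
      simpa [Real.norm_eq_abs] using h
    have hfint : Integrable (fun ω => exp (l * Y ω)) μ := by
      refine Integrable.mono' (integrable_const (exp (|l| * c)))
        (Real.continuous_exp.comp_stronglyMeasurable (hY.const_mul l)).aestronglyMeasurable ?_
      filter_upwards [hc] with ω h
      rw [Real.norm_eq_abs, abs_of_pos (exp_pos _), exp_le_exp]
      calc l * Y ω ≤ |l * Y ω| := le_abs_self _
        _ = |l| * |Y ω| := abs_mul _ _
        _ ≤ |l| * c := by
            exact mul_le_mul_of_nonneg_left h (abs_nonneg _)
    have hcne : c ≠ 0 := ne_of_gt hcpos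
    have h2c : (2*c) ≠ 0 := by positivity
    set g : Ω → ℝ := fun ω => cosh (l*c) + (Y ω / c) * sinh (l*c) with hg_def
    have hgint : Integrable g μ :=
      (integrable_const _).add ((hYint.div_const c).mul_const _)
    have key : (fun ω => exp (l * Y ω)) ≤ᵐ[μ] g := by
      filter_upwards [hc] with ω h
      have ha : (0:ℝ) ≤ (c - Y ω)/(2*c) := by
        apply div_nonneg _ (by linarith)
        rw [abs_le] at h
        linarith [h.2]
      have hb : (0:ℝ) ≤ (c + Y ω)/(2*c) := by
        apply div_nonneg _ (by linarith)
        rw [abs_le] at h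
        linarith [h.1]
      have hab : (c - Y ω)/(2*c) + (c + Y ω)/(2*c) = 1 := by
        rw [← add_div, div_eq_one_iff_eq h2c]
        ring
      have hcv := convexOn_exp.2 (Set.mem_univ (-(l*c))) (Set.mem_univ (l*c)) ha hb hab
      simp only [smul_eq_mul] at hcv
      have harg : (c - Y ω)/(2*c) * (-(l*c)) + (c + Y ω)/(2*c) * (l*c) = l * Y ω := by
        apply mul_left_cancel₀ h2c
        field_simp
        ring
      rw [harg] at hcv
      refine hcv.trans (le_of_eq ?_)
      show _ = cosh (l*c) + (Y ω / c) * sinh (l*c)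
      rw [Real.cosh_eq, Real.sinh_eq]
      apply mul_left_cancel₀ h2c
      field_simp
      ring
    have hmono := condExp_mono (m := m) hfint hgint key
    have hgce : μ[g|m] =ᵐ[μ] fun _ => cosh (l*c) := by
      have hg_eq : g = (fun _ => cosh (l*c)) + (sinh (l*c)/c) • Y := by
        funext ω
        simp only [hg_def, Pi.add_apply, Pi.smul_apply, smul_eq_mul]
        ring
      rw [hg_eq]
      calc μ[(fun _ => cosh (l*c)) + (sinh (l*c)/c) • Y|m]
          =ᵐ[μ] μ[fun _ => cosh (l*c)|m] + μ[(sinh (l*c)/c) • Y|m] :=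
            condExp_add (integrable_const _) (hYint.smul _) m
        _ =ᵐ[μ] (fun _ => cosh (l*c)) + (sinh (l*c)/c) • μ[Y|m] := by
            refine Filter.EventuallyEq.add ?_ (condExp_smul _ _ m)
            rw [condExp_const hm]
        _ =ᵐ[μ] fun _ => cosh (l*c) := by
            filter_upwards [h0] with ω h
            simp [h]
    refine hmono.trans (hgce.le.trans ?_)
    refine Filter.Eventually.of_forall fun ω => ?_
    calc cosh (l*c) ≤ exp ((l*c)^2/2) := cosh_le_exp_half_sq _
      _ = exp (l^2 * c^2 / 2) := by rw [mul_pow]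


lemma integrable_exp_of_le {Ω : Type*} {m0 : MeasurableSpace Ω} (μ : Measure Ω)
    [IsProbabilityMeasure μ] (f : Ω → ℝ) (hf : AEStronglyMeasurable f μ) (B : ℝ)
    (h : ∀ᵐ ω ∂μ, f ω ≤ B) : Integrable (fun ω => exp (f ω)) μ := by
  refine Integrable.mono' (integrable_const (exp B))
    (Real.continuous_exp.comp_aestronglyMeasurable hf) ?_
  filter_upwards [h] with ω hω
  rw [Real.norm_eq_abs, abs_of_pos (exp_pos _), exp_le_exp]
  exact hω

lemma azuma_mgf {Ω : Type*} {m0 : MeasurableSpace Ω} (μ : Measure Ω) [IsProbabilityMeasure μ]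
    (H : ℕ → MeasurableSpace Ω) (hH : Monotone H) (hHm : ∀ i, H i ≤ m0)
    (Y : ℕ → Ω → ℝ) (c : ℕ → ℝ)
    (hmeas : ∀ i, StronglyMeasurable[H (i+1)] (Y i))
    (hcond : ∀ i, μ[Y i|H i] =ᵐ[μ] 0)
    (hbd : ∀ i, ∀ᵐ ω ∂μ, |Y i ω| ≤ c i)
    (l : ℝ) (n : ℕ) :
    ∫ ω, exp (l * ∑ i ∈ Finset.range n, Y i ω) ∂μ
      ≤ exp (l^2 * (∑ i ∈ Finset.range n, (c i)^2) / 2) := by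
  have hball : ∀ (s : Finset ℕ), ∀ᵐ ω ∂μ, |∑ i ∈ s, Y i ω| ≤ ∑ i ∈ s, c i := by
    intro s
    filter_upwards [ae_all_iff.2 hbd] with ω hω
    exact (Finset.abs_sum_le_sum_abs _ _).trans (Finset.sum_le_sum fun i _ => hω i)
  have hYm0 : ∀ i, StronglyMeasurable (Y i) := fun i => (hmeas i).mono (hHm (i+1))
  have hSmeas : ∀ n, StronglyMeasurable (fun ω => ∑ i ∈ Finset.range n, Y i ω) := by
    intro n
    exact Finset.stronglyMeasurable_fun_sum _ (fun i _ => hYm0 i)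
  have hint_expS : ∀ n, Integrable (fun ω => exp (l * ∑ i ∈ Finset.range n, Y i ω)) μ := by
    intro n
    refine integrable_exp_of_le μ _ ((hSmeas n).const_mul l).aestronglyMeasurable
      (|l| * ∑ i ∈ Finset.range n, c i) ?_
    filter_upwards [hball (Finset.range n)] with ω hω
    calc l * ∑ i ∈ Finset.range n, Y i ω ≤ |l * ∑ i ∈ Finset.range n, Y i ω| := le_abs_self _
      _ = |l| * |∑ i ∈ Finset.range n, Y i ω| := abs_mul _ _
      _ ≤ |l| * ∑ i ∈ Finset.range n, c i := mul_le_mul_of_nonneg_left hω (abs_nonneg _)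
  induction n with
  | zero => simp
  | succ n ih =>
    haveI : SigmaFinite (μ.trim (hHm n)) := inferInstance
    set S : Ω → ℝ := fun ω => ∑ i ∈ Finset.range n, Y i ω with hS_def
    set f : Ω → ℝ := fun ω => exp (l * S ω) with hf_def
    set g : Ω → ℝ := fun ω => exp (l * Y n ω) with hg_def
    have hfmeas : StronglyMeasurable[H n] f := by
      refine Real.continuous_exp.comp_stronglyMeasurable ?_
      refine StronglyMeasurable.const_mul ?_ l
      refine Finset.stronglyMeasurable_fun_sum _ (fun i hi => ?_)
      exact (hmeas i).mono (hH (Finset.mem_range.1 hi))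
    have hfint : Integrable f μ := hint_expS n
    have hgint : Integrable g μ := by
      refine integrable_exp_of_le μ _ ((hYm0 n).const_mul l).aestronglyMeasurable (|l| * c n) ?_
      filter_upwards [hbd n] with ω hω
      calc l * Y n ω ≤ |l * Y n ω| := le_abs_self _
        _ = |l| * |Y n ω| := abs_mul _ _
        _ ≤ |l| * c n := mul_le_mul_of_nonneg_left hω (abs_nonneg _)
    have hfgint : Integrable (f * g) μ := by
      have : (f * g) = fun ω => exp (l * ∑ i ∈ Finset.range (n+1), Y i ω) := by
        funext ω
        simp only [hf_def, hg_def, Pi.mul_apply, Finset.sum_range_succ, hS_def]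
        rw [← Real.exp_add]
        ring_nf
      rw [this]
      exact hint_expS (n+1)
    have h2 : μ[f * g|H n] =ᵐ[μ] f * μ[g|H n] :=
      condExp_mul_of_stronglyMeasurable_left hfmeas hfgint hgint
    have h3 : μ[g|H n] ≤ᵐ[μ] fun _ => exp (l^2 * (c n)^2 / 2) :=
      condexp_exp_le (hHm n) μ (Y n) (hYm0 n) (c n) l (hbd n) (hcond n)
    have heq : ∫ ω, exp (l * ∑ i ∈ Finset.range (n+1), Y i ω) ∂μ
        = ∫ ω, (f * μ[g|H n]) ω ∂μ := by
      have e1 : (fun ω => exp (l * ∑ i ∈ Finset.range (n+1), Y i ω)) = f * g := by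
        funext ω
        simp only [hf_def, hg_def, Pi.mul_apply, Finset.sum_range_succ, hS_def]
        rw [← Real.exp_add]
        ring_nf
      rw [e1, ← integral_condExp (hHm n)]
      exact integral_congr_ae h2
    rw [heq]
    have hle : ∫ ω, (f * μ[g|H n]) ω ∂μ ≤ ∫ ω, f ω * exp (l^2 * (c n)^2 / 2) ∂μ := by
      refine integral_mono_ae (integrable_condExp.congr h2) (hfint.mul_const _) ?_
      filter_upwards [h3] with ω hω
      exact mul_le_mul_of_nonneg_left hω (exp_pos _).le
    refine hle.trans ?_
    rw [integral_mul_const]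
    calc (∫ ω, f ω ∂μ) * exp (l^2 * (c n)^2 / 2)
        ≤ exp (l^2 * (∑ i ∈ Finset.range n, (c i)^2) / 2) * exp (l^2 * (c n)^2 / 2) := by
          exact mul_le_mul_of_nonneg_right ih (exp_pos _).le
      _ = exp (l^2 * (∑ i ∈ Finset.range (n+1), (c i)^2) / 2) := by
          rw [← Real.exp_add, Finset.sum_range_succ]
          congr 1
          ring


lemma azuma_tail {Ω : Type*} {m0 : MeasurableSpace Ω} (μ : Measure Ω) [IsProbabilityMeasure μ]
    (H : ℕ → MeasurableSpace Ω) (hH : Monotone H) (hHm : ∀ i, H i ≤ m0)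
    (Y : ℕ → Ω → ℝ) (c : ℕ → ℝ)
    (hmeas : ∀ i, StronglyMeasurable[H (i+1)] (Y i))
    (hcond : ∀ i, μ[Y i|H i] =ᵐ[μ] 0)
    (hbd : ∀ i, ∀ᵐ ω ∂μ, |Y i ω| ≤ c i)
    (n : ℕ) (ε : ℝ) (hε : 0 ≤ ε)
    (hV : 0 < ∑ i ∈ Finset.range n, (c i)^2) :
    μ {ω | ε ≤ ∑ i ∈ Finset.range n, Y i ω}
      ≤ ENNReal.ofReal (exp (-(ε^2) / (2 * ∑ i ∈ Finset.range n, (c i)^2))) := by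
  set V := ∑ i ∈ Finset.range n, (c i)^2 with hV_def
  set l := ε / V with hl_def
  have hl : 0 ≤ l := div_nonneg hε hV.le
  have hint : Integrable (fun ω => exp (l * ∑ i ∈ Finset.range n, Y i ω)) μ := by
    refine integrable_exp_of_le μ _ ?_ (|l| * ∑ i ∈ Finset.range n, c i) ?_
    · refine AEStronglyMeasurable.const_mul ?_ l
      exact (Finset.stronglyMeasurable_fun_sum _
        (fun i _ => ((hmeas i).mono (hHm (i+1))))).aestronglyMeasurable
    · filter_upwards [ae_all_iff.2 hbd] with ω hω
      have habs : |∑ i ∈ Finset.range n, Y i ω| ≤ ∑ i ∈ Finset.range n, c i :=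
        (Finset.abs_sum_le_sum_abs _ _).trans (Finset.sum_le_sum fun i _ => hω i)
      calc l * ∑ i ∈ Finset.range n, Y i ω ≤ |l * ∑ i ∈ Finset.range n, Y i ω| := le_abs_self _
        _ = |l| * |∑ i ∈ Finset.range n, Y i ω| := abs_mul _ _
        _ ≤ |l| * ∑ i ∈ Finset.range n, c i := mul_le_mul_of_nonneg_left habs (abs_nonneg _)
  have hcher := ProbabilityTheory.measure_ge_le_exp_mul_mgf
    (X := fun ω => ∑ i ∈ Finset.range n, Y i ω) (μ := μ) ε hl hint
  have hmgf : ProbabilityTheory.mgf (fun ω => ∑ i ∈ Finset.range n, Y i ω) μ l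
      ≤ exp (l^2 * V / 2) := azuma_mgf μ H hH hHm Y c hmeas hcond hbd l n
  have hbound : exp (-l * ε) * ProbabilityTheory.mgf (fun ω => ∑ i ∈ Finset.range n, Y i ω) μ l
      ≤ exp (-(ε^2) / (2 * V)) := by
    calc exp (-l * ε) * _ ≤ exp (-l * ε) * exp (l^2 * V / 2) :=
          mul_le_mul_of_nonneg_left hmgf (exp_pos _).le
      _ = exp (-l * ε + l^2 * V / 2) := (Real.exp_add _ _).symm
      _ = exp (-(ε^2) / (2 * V)) := by
          congr 1
          rw [hl_def]
          field_simp
          ring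
  have htoReal := hcher.trans hbound
  calc μ {ω | ε ≤ ∑ i ∈ Finset.range n, Y i ω}
      = ENNReal.ofReal (μ {ω | ε ≤ ∑ i ∈ Finset.range n, Y i ω}).toReal :=
        (ENNReal.ofReal_toReal (measure_ne_top _ _)).symm
    _ ≤ ENNReal.ofReal (exp (-(ε^2) / (2 * V))) := ENNReal.ofReal_le_ofReal htoReal

lemma azuma_tail_two {Ω : Type*} {m0 : MeasurableSpace Ω} (μ : Measure Ω) [IsProbabilityMeasure μ]
    (H : ℕ → MeasurableSpace Ω) (hH : Monotone H) (hHm : ∀ i, H i ≤ m0)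
    (Y : ℕ → Ω → ℝ) (c : ℕ → ℝ)
    (hmeas : ∀ i, StronglyMeasurable[H (i+1)] (Y i))
    (hcond : ∀ i, μ[Y i|H i] =ᵐ[μ] 0)
    (hbd : ∀ i, ∀ᵐ ω ∂μ, |Y i ω| ≤ c i)
    (n : ℕ) (ε : ℝ) (hε : 0 ≤ ε)
    (hV : 0 < ∑ i ∈ Finset.range n, (c i)^2) :
    μ {ω | ε < |∑ i ∈ Finset.range n, Y i ω|}
      ≤ ENNReal.ofReal (2 * exp (-(ε^2) / (2 * ∑ i ∈ Finset.range n, (c i)^2))) := by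
  have hsub : {ω | ε < |∑ i ∈ Finset.range n, Y i ω|}
      ⊆ {ω | ε ≤ ∑ i ∈ Finset.range n, Y i ω} ∪
        {ω | ε ≤ ∑ i ∈ Finset.range n, (fun ω' => -(Y i ω')) ω} := by
    intro ω hω
    simp only [Set.mem_setOf_eq] at hω ⊢
    rcases lt_abs.1 hω with h | h
    · exact Or.inl h.le
    · refine Or.inr ?_
      simp only [Set.mem_setOf_eq, Finset.sum_neg_distrib]
      exact h.le
  have h1 := azuma_tail μ H hH hHm Y c hmeas hcond hbd n ε hε hV
  have h2 := azuma_tail μ H hH hHm (fun i ω => -(Y i ω)) c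
    (fun i => (hmeas i).neg)
    (fun i => by
      have := condExp_neg (μ := μ) (m := H i) (Y i)
      refine this.trans ?_
      filter_upwards [hcond i] with ω hω
      simp only [Pi.neg_apply, hω, Pi.zero_apply, neg_zero])
    (fun i => by filter_upwards [hbd i] with ω hω; simpa using hω)
    n ε hε hV
  calc μ {ω | ε < |∑ i ∈ Finset.range n, Y i ω|}
      ≤ μ ({ω | ε ≤ ∑ i ∈ Finset.range n, Y i ω} ∪
          {ω | ε ≤ ∑ i ∈ Finset.range n, (fun ω' => -(Y i ω')) ω}) := measure_mono hsub
    _ ≤ _ + _ := measure_union_le _ _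
    _ ≤ ENNReal.ofReal (exp (-(ε^2) / (2 * ∑ i ∈ Finset.range n, (c i)^2)))
        + ENNReal.ofReal (exp (-(ε^2) / (2 * ∑ i ∈ Finset.range n, (c i)^2))) :=
          add_le_add h1 h2
    _ = ENNReal.ofReal (2 * exp (-(ε^2) / (2 * ∑ i ∈ Finset.range n, (c i)^2))) := by
        rw [← ENNReal.ofReal_add (exp_pos _).le (exp_pos _).le]
        congr 1
        ring

theorem shifted_azuma_hoeffding
    {Ω : Type*} [MeasurableSpace Ω] (μ : Measure Ω) [IsProbabilityMeasure μ]
    (F : Filtration ℕ (by infer_instance : MeasurableSpace Ω))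
    (τ : ℕ) (hτ : 1 ≤ τ)
    (X : ℕ → Ω → ℝ) (Xbar : ℕ → ℝ)
    (hadapted : StronglyAdapted F X)
    (hint : ∀ t, Integrable (X t) μ)
    (hcond : ∀ t, τ ≤ t → μ[X t | F (t - τ)] =ᵐ[μ] 0)
    (hcond0 : ∀ t, t < τ → ∫ ω, X t ω ∂μ = 0)
    (hbd : ∀ t, ∀ᵐ ω ∂μ, |X t ω| ≤ Xbar t)
    (t : ℕ) (δ : ℝ) (hδ : δ ∈ Set.Ioo (0:ℝ) 1) :
    ENNReal.ofReal (1 - δ) ≤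
      μ {ω | |∑ k ∈ Finset.range (t + 1), X k ω| ≤
        Real.sqrt (2 * τ * (∑ k ∈ Finset.range (t + 1), (Xbar k) ^ 2) *
          Real.log (2 * τ / δ))} := by
  obtain ⟨hδ0, hδ1⟩ := hδ
  have hXbar0 : ∀ k, 0 ≤ Xbar k := by
    intro k
    obtain ⟨ω, hω⟩ := (hbd k).exists
    exact (abs_nonneg _).trans hω
  have hτR : (1:ℝ) ≤ (τ:ℝ) := by exact_mod_cast hτ
  set L := Real.log (2 * τ / δ) with hL_def
  have hL_pos : 0 < L := by
    apply Real.log_pos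
    rw [lt_div_iff₀ hδ0]
    nlinarith
  -- data for each residue class
  set cc : ℕ → ℕ → ℝ := fun r i => if r + i*τ ≤ t then Xbar (r+i*τ) else 0 with hcc_def
  set Y : ℕ → ℕ → Ω → ℝ :=
    fun r i ω => if r + i*τ ≤ t then X (r+i*τ) ω else 0 with hY_def
  set H : ℕ → ℕ → MeasurableSpace Ω :=
    fun r i => if i = 0 then ⊥ else F (r + (i-1)*τ) with hH_def
  set V : ℕ → ℝ := fun r => ∑ i ∈ Finset.range (t+1), (cc r i)^2 with hV_def
  set ee : ℕ → ℝ := fun r => Real.sqrt (2 * V r * L) with hee_def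
  have hV0 : ∀ r, 0 ≤ V r := fun r => Finset.sum_nonneg fun i _ => sq_nonneg _
  have hH_mono : ∀ r, Monotone (H r) := by
    intro r
    apply monotone_nat_of_le_succ
    intro i
    match i with
    | 0 => exact bot_le
    | (j+1) =>
      simp only [hH_def, Nat.succ_ne_zero, if_false, Nat.add_sub_cancel]
      refine F.mono ?_
      have h1 : j*τ ≤ (j+1)*τ := Nat.mul_le_mul_right τ (Nat.le_succ j)
      omega
  have hH_le : ∀ r i, H r i ≤ (by infer_instance : MeasurableSpace Ω) := by
    intro r i
    simp only [hH_def]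
    split_ifs
    · exact bot_le
    · exact F.le _
  have hmeas : ∀ r i, StronglyMeasurable[H r (i+1)] (Y r i) := by
    intro r i
    have hHi : H r (i+1) = F (r + i*τ) := by
      simp [hH_def]
    rw [hHi]
    simp only [hY_def]
    by_cases h : r + i*τ ≤ t
    · simp only [h, if_true]
      exact hadapted (r + i*τ)
    · simp only [h, if_false]
      exact stronglyMeasurable_const
  have hbd' : ∀ r i, ∀ᵐ ω ∂μ, |Y r i ω| ≤ cc r i := by
    intro r i
    simp only [hY_def, hcc_def]
    by_cases h : r + i*τ ≤ t
    · simp only [h, if_true]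
      exact hbd _
    · simp only [h, if_false]
      exact ae_of_all _ fun ω => by simp
  have hcond' : ∀ r, r < τ → ∀ i, μ[Y r i|H r i] =ᵐ[μ] 0 := by
    intro r hr i
    by_cases h : r + i*τ ≤ t
    · by_cases hi0 : i = 0
      · subst hi0
        have hY0 : Y r 0 = X r := by
          funext ω
          simp only [hY_def]
          rw [if_pos (by omega)]
          congr 1
          omega
        have hH0 : H r 0 = ⊥ := by simp [hH_def]
        rw [hY0, hH0, condExp_bot]
        refine Filter.EventuallyEq.of_eq ?_
        funext ω
        simp [hcond0 r hr]
      · have hτle : τ ≤ r + i*τ := by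
          have : 1 ≤ i := Nat.one_le_iff_ne_zero.2 hi0
          calc τ = 0 + 1*τ := by ring
            _ ≤ r + i*τ := by
                apply add_le_add (Nat.zero_le r)
                exact Nat.mul_le_mul_right τ this
        have hidx : (r + i*τ) - τ = r + (i-1)*τ := by
          have h1 : 1 ≤ i := Nat.one_le_iff_ne_zero.2 hi0
          cases i with
          | zero => omega
          | succ j => simp [Nat.succ_sub_one, Nat.succ_mul]; omega
        have hc := hcond (r + i*τ) hτle
        rw [hidx] at hc
        have hY0 : Y r i = X (r + i*τ) := by
          funext ω
          simp only [hY_def, h, if_true]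
        have hH0 : H r i = F (r + (i-1)*τ) := by
          simp [hH_def, hi0]
        rw [hY0, hH0]
        exact hc
    · have hY0 : Y r i = 0 := by
        funext ω
        simp only [hY_def, h, if_false, Pi.zero_apply]
      rw [hY0, condExp_zero]
  -- bad events
  set B : ℕ → Set Ω := fun r => {ω | ee r < |∑ i ∈ Finset.range (t+1), Y r i ω|} with hB_def
  have claimA : ∀ r ∈ Finset.range τ, μ (B r) ≤ ENNReal.ofReal (δ/τ) := by
    intro r hr
    have hr' : r < τ := Finset.mem_range.1 hr
    rcases (hV0 r).eq_or_lt with hVr | hVr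
    · -- V r = 0 : all bounds zero
      have hz : ∀ i ∈ Finset.range (t+1), (cc r i)^2 = 0 := by
        intro i hi
        exact (Finset.sum_eq_zero_iff_of_nonneg (fun j _ => sq_nonneg _)).1 hVr.symm i hi
      have hS0 : ∀ᵐ ω ∂μ, ∑ i ∈ Finset.range (t+1), Y r i ω = 0 := by
        filter_upwards [ae_all_iff.2 (hbd' r)] with ω hω
        refine Finset.sum_eq_zero fun i hi => ?_
        have : (cc r i) = 0 := pow_eq_zero_iff (n := 2) (by norm_num) |>.1 (hz i hi)
        have := (hω i).trans this.le
        exact abs_nonpos_iff.1 this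
      have hee0 : ee r = 0 := by
        simp [hee_def, ← hVr]
      have hsub : B r ⊆ {ω | ¬ (∑ i ∈ Finset.range (t+1), Y r i ω = 0)} := by
        intro ω hω
        simp only [hB_def, Set.mem_setOf_eq, hee0] at hω ⊢
        intro hcontra
        rw [hcontra] at hω
        simp at hω
      calc μ (B r) ≤ μ {ω | ¬ (∑ i ∈ Finset.range (t+1), Y r i ω = 0)} := measure_mono hsub
        _ = 0 := ae_iff.1 hS0
        _ ≤ ENNReal.ofReal (δ/τ) := zero_le
    · -- V r > 0
      have h2 := azuma_tail_two μ (H r) (hH_mono r) (hH_le r) (Y r) (cc r)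
        (hmeas r) (hcond' r hr') (hbd' r) (t+1) (ee r) (Real.sqrt_nonneg _) hVr
      refine h2.trans (ENNReal.ofReal_le_ofReal ?_)
      have hsq : (ee r)^2 = 2 * V r * L := Real.sq_sqrt (by positivity)
      rw [hsq]
      have hexp : -(2 * V r * L) / (2 * V r) = -L := by
        field_simp
      rw [hexp, Real.exp_neg, hL_def, Real.exp_log (by positivity), inv_div]
      have hτ0 : (τ:ℝ) ≠ 0 := by positivity
      apply le_of_eq
      field_simp
  -- good event inclusion
  have hVsum : ∑ r ∈ Finset.range τ, V r = ∑ k ∈ Finset.range (t+1), (Xbar k)^2 := by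
    simp only [hV_def, hcc_def]
    rw [← sum_residue τ t hτ (fun k => (Xbar k)^2)]
    refine Finset.sum_congr rfl fun r _ => Finset.sum_congr rfl fun i _ => ?_
    split_ifs <;> simp
  have claimB : (⋃ r ∈ Finset.range τ, B r)ᶜ ⊆
      {ω | |∑ k ∈ Finset.range (t + 1), X k ω| ≤
        Real.sqrt (2 * τ * (∑ k ∈ Finset.range (t + 1), (Xbar k) ^ 2) * L)} := by
    intro ω hω
    simp only [Set.mem_compl_iff, Set.mem_iUnion, not_exists] at hω
    have hgood : ∀ r ∈ Finset.range τ, |∑ i ∈ Finset.range (t+1), Y r i ω| ≤ ee r := by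
      intro r hr
      have h1 := hω r hr
      simpa [hB_def, not_lt] using h1
    simp only [Set.mem_setOf_eq]
    have hdecomp : ∑ k ∈ Finset.range (t+1), X k ω
        = ∑ r ∈ Finset.range τ, ∑ i ∈ Finset.range (t+1), Y r i ω :=
      (sum_residue τ t hτ (fun k => X k ω)).symm
    rw [hdecomp]
    calc |∑ r ∈ Finset.range τ, ∑ i ∈ Finset.range (t+1), Y r i ω|
        ≤ ∑ r ∈ Finset.range τ, |∑ i ∈ Finset.range (t+1), Y r i ω| :=
          Finset.abs_sum_le_sum_abs _ _
      _ ≤ ∑ r ∈ Finset.range τ, ee r := Finset.sum_le_sum hgood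
      _ ≤ Real.sqrt (2 * τ * (∑ k ∈ Finset.range (t+1), (Xbar k)^2) * L) := by
          rw [Real.le_sqrt (Finset.sum_nonneg fun r _ => Real.sqrt_nonneg _)
            (by positivity)]
          calc (∑ r ∈ Finset.range τ, ee r)^2
              ≤ (Finset.range τ).card * ∑ r ∈ Finset.range τ, (ee r)^2 :=
                sq_sum_le_card_mul_sum_sq
            _ = τ * ∑ r ∈ Finset.range τ, (2 * V r * L) := by
                rw [Finset.card_range]
                congr 1
                refine Finset.sum_congr rfl fun r _ => ?_
                exact Real.sq_sqrt (by positivity)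
            _ = 2 * τ * (∑ r ∈ Finset.range τ, V r) * L := by
                rw [Finset.mul_sum, Finset.mul_sum, Finset.sum_mul]
                exact Finset.sum_congr rfl fun r _ => by ring
            _ = 2 * τ * (∑ k ∈ Finset.range (t+1), (Xbar k)^2) * L := by rw [hVsum]
  -- union bound
  have hUnion : μ (⋃ r ∈ Finset.range τ, B r) ≤ ENNReal.ofReal δ := by
    refine (measure_biUnion_finset_le _ _).trans ?_
    calc ∑ r ∈ Finset.range τ, μ (B r) ≤ ∑ r ∈ Finset.range τ, ENNReal.ofReal (δ/τ) :=
          Finset.sum_le_sum claimA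
      _ = (τ : ENNReal) * ENNReal.ofReal (δ/τ) := by
          rw [Finset.sum_const, Finset.card_range, nsmul_eq_mul]
      _ = ENNReal.ofReal δ := by
          rw [← ENNReal.ofReal_natCast τ, ← ENNReal.ofReal_mul (by positivity)]
          congr 1
          field_simp
  calc ENNReal.ofReal (1 - δ) = 1 - ENNReal.ofReal δ := by
        rw [← ENNReal.ofReal_one, ← ENNReal.ofReal_sub _ hδ0.le]
    _ ≤ 1 - μ (⋃ r ∈ Finset.range τ, B r) := tsub_le_tsub_left hUnion 1
    _ ≤ μ ((⋃ r ∈ Finset.range τ, B r)ᶜ) := by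
        rw [tsub_le_iff_left]
        rw [← measure_univ (μ := μ), ← Set.union_compl_self (⋃ r ∈ Finset.range τ, B r)]
        exact measure_union_le _ _
    _ ≤ μ {ω | |∑ k ∈ Finset.range (t + 1), X k ω| ≤
        Real.sqrt (2 * τ * (∑ k ∈ Finset.range (t + 1), (Xbar k) ^ 2) * L)} :=
        measure_mono claimB
end

section
/- Let γ ∈ (0,1), and consider a Markov decision process with finite state-action set Z, reward r : Z → [0, r̄], transition matrix P (row-stochastic), and Bellman operator TD(Q) = r + γ P Q. Let W be a finite set, φ : Z → W, Φ the lift operator and Π the conditional expectation operator for a distribution d with positive marginals on W. Suppose Q* is the fixed point of TD and satisfies the fiber-variation bound |Q*(z) − Q*(z')| ≤ ε when φ(z) = φ(z'). Then the fixed point Q̂ of g = Π ∘ TD ∘ Φ satisfies sup_{z ∈ Z} |Q̂(φ(z)) − Q*(z)| ≤ ε/(1−γ). -/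
theorem truncated_bellman_fixed_point_error
    {Z W : Type*} [Fintype Z] [Fintype W] [Nonempty Z] [Nonempty W]
    [DecidableEq W]
    (γ rbar : ℝ) (hγ : γ ∈ Set.Ioo (0:ℝ) 1)
    (r : Z → ℝ) (hr : ∀ z, 0 ≤ r z ∧ r z ≤ rbar)
    (P : Z → Z → ℝ) (hP0 : ∀ z z', 0 ≤ P z z') (hP1 : ∀ z, ∑ z' : Z, P z z' = 1)
    (φ : Z → W) (hφ : Function.Surjective φ)
    (d : Z → ℝ) (hd0 : ∀ z, 0 ≤ d z) (hd1 : ∑ z : Z, d z = 1)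
    (hfiber : ∀ w : W, 0 < ∑ z ∈ Finset.univ.filter (fun z => φ z = w), d z)
    (Qstar : Z → ℝ)
    (hQstar : ∀ z : Z, Qstar z = r z + γ * ∑ z' : Z, P z z' * Qstar z')
    (ε : ℝ)
    (hvar : ∀ z z' : Z, φ z = φ z' → |Qstar z - Qstar z'| ≤ ε)
    (Qhat : W → ℝ)
    (hQhat : ∀ w : W,
      Qhat w =
        (∑ z ∈ Finset.univ.filter (fun z => φ z = w),
            d z * (r z + γ * ∑ z' : Z, P z z' * Qhat (φ z'))) /
          (∑ z ∈ Finset.univ.filter (fun z => φ z = w), d z)) :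
    ∀ z : Z, |Qhat (φ z) - Qstar z| ≤ ε / (1 - γ) := by
  obtain ⟨hγ0, hγ1⟩ := hγ
  have hε0 : 0 ≤ ε := by
    have := hvar (Classical.arbitrary Z) (Classical.arbitrary Z) rfl
    simpa using this
  set E : Z → ℝ := fun z => |Qhat (φ z) - Qstar z| with hE
  obtain ⟨z0, -, hz0⟩ := Finset.exists_max_image Finset.univ E
    ⟨Classical.arbitrary Z, Finset.mem_univ _⟩
  have hmax : ∀ z, E z ≤ E z0 := fun z => hz0 z (Finset.mem_univ z)
  set M := E z0 with hM
  have hM0 : 0 ≤ M := abs_nonneg _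
  set F := Finset.univ.filter (fun z => φ z = φ z0) with hF
  set D := ∑ z ∈ F, d z with hD
  have hDpos : 0 < D := hfiber (φ z0)
  set T : Z → ℝ := fun z => r z + γ * ∑ z' : Z, P z z' * Qhat (φ z') with hT
  have hsplit : (∑ z ∈ F, d z * (T z - Qstar z0))
      = (∑ z ∈ F, d z * T z) - D * Qstar z0 := by
    simp [mul_sub, Finset.sum_sub_distrib, hD, Finset.sum_mul]
  have hrep : Qhat (φ z0) - Qstar z0
      = (∑ z ∈ F, d z * (T z - Qstar z0)) / D := by
    rw [hsplit, hQhat (φ z0)]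
    field_simp
    change ((∑ z ∈ F, d z * T z) / D - Qstar z0) * D = _
    rw [sub_mul, div_mul_cancel₀ _ hDpos.ne']
  -- pointwise bound on F
  have hpt : ∀ z ∈ F, |T z - Qstar z0| ≤ γ * M + ε := by
    intro z hz
    have hzw : φ z = φ z0 := by simpa [hF] using hz
    have h1 : T z - Qstar z = γ * ∑ z' : Z, P z z' * (Qhat (φ z') - Qstar z') := by
      rw [hT]
      rw [hQstar z]
      simp [mul_sub, Finset.sum_sub_distrib, mul_sub]
    have h2 : |T z - Qstar z| ≤ γ * M := by
      rw [h1, abs_mul, abs_of_pos hγ0]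
      have : |∑ z' : Z, P z z' * (Qhat (φ z') - Qstar z')| ≤ M := by
        calc |∑ z' : Z, P z z' * (Qhat (φ z') - Qstar z')|
            ≤ ∑ z' : Z, |P z z' * (Qhat (φ z') - Qstar z')| := Finset.abs_sum_le_sum_abs _ _
          _ ≤ ∑ z' : Z, P z z' * M := by
              apply Finset.sum_le_sum
              intro i _
              rw [abs_mul, abs_of_nonneg (hP0 z i)]
              exact mul_le_mul_of_nonneg_left (hmax i) (hP0 z i)
          _ = M := by rw [← Finset.sum_mul, hP1 z, one_mul]
      exact mul_le_mul_of_nonneg_left this hγ0.le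
    have h3 : |Qstar z - Qstar z0| ≤ ε := hvar z z0 hzw
    calc |T z - Qstar z0| = |(T z - Qstar z) + (Qstar z - Qstar z0)| := by ring_nf
      _ ≤ |T z - Qstar z| + |Qstar z - Qstar z0| := abs_add_le _ _
      _ ≤ γ * M + ε := add_le_add h2 h3
  have hkey : M ≤ γ * M + ε := by
    have : |Qhat (φ z0) - Qstar z0| ≤ γ * M + ε := by
      rw [hrep, abs_div, abs_of_pos hDpos]
      rw [div_le_iff₀ hDpos]
      calc |∑ z ∈ F, d z * (T z - Qstar z0)|
          ≤ ∑ z ∈ F, |d z * (T z - Qstar z0)| := Finset.abs_sum_le_sum_abs _ _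
        _ ≤ ∑ z ∈ F, d z * (γ * M + ε) := by
            apply Finset.sum_le_sum
            intro i hi
            rw [abs_mul, abs_of_nonneg (hd0 i)]
            exact mul_le_mul_of_nonneg_left (hpt i hi) (hd0 i)
        _ = (γ * M + ε) * D := by rw [← Finset.sum_mul, hD]; ring
    exact this
  have hMle : M ≤ ε / (1 - γ) := by
    rw [le_div_iff₀ (by linarith)]
    nlinarith
  intro z
  exact le_trans (hmax z) hMle
end
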